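/- Let D₁, D₂ be division rings with an anti-isomorphism φ : D₁ → D₂, extended entrywise to matrix rings A_i = M(n, D_i), and let A = A₁ × A₂ with the φ-flip transpose involution (a₁, a₂)* = (φ⁻¹(a₂)ᵗ, φ(a₁)ᵗ). If a, c ∈ A satisfy Aa + Ac = A and a*c = c*a, then there exist s ∈ A^sym and r ∈ A× with a = sc + r. In particular, A is *-Euclidean of decomposition length 1. -/
import Mathlib

open Matrix

section LinearAlgebra

variable {K V : Type*} [DivisionRing K] [AddCommGroup V] [Module K V] [FiniteDimensional K V]

/-- Key linear algebra fact: if the ranges of `A` and `C` span, there is `S`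
with `A + C ∘ S` bijective. -/
lemma aux_keyLA (A C : V →ₗ[K] V) (h : LinearMap.range A ⊔ LinearMap.range C = ⊤) :
    ∃ S : V →ₗ[K] V, Function.Bijective (A + C ∘ₗ S) := by
  classical
  obtain ⟨M, hM⟩ := Submodule.exists_isCompl (LinearMap.ker A)
  set q := (LinearMap.range A).mkQ with hq
  have hqC : LinearMap.range (q ∘ₗ C) = ⊤ := by
    rw [LinearMap.range_comp]
    have hmap : Submodule.map q (LinearMap.range A ⊔ LinearMap.range C) = ⊤ := by
      rw [h, Submodule.map_top, LinearMap.range_eq_top.2 (Submodule.mkQ_surjective _)]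
    rwa [Submodule.map_sup, hq, Submodule.mkQ_map_self, bot_sup_eq] at hmap
  obtain ⟨g, hg⟩ := (q ∘ₗ C).exists_rightInverse_of_surjective hqC
  have heq : Module.finrank K (LinearMap.ker A)
      = Module.finrank K (V ⧸ LinearMap.range A) := by
    have h1 := LinearMap.finrank_range_add_finrank_ker A
    have h2 := Submodule.finrank_quotient_add_finrank (LinearMap.range A)
    omega
  obtain ⟨e⟩ := FiniteDimensional.nonempty_linearEquiv_of_finrank_eq heq
  set π₀ := (LinearMap.ker A).linearProjOfIsCompl M hM with hπ₀
  refine ⟨g ∘ₗ (e.toLinearMap ∘ₗ π₀), ?_⟩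
  set S : V →ₗ[K] V := g ∘ₗ (e.toLinearMap ∘ₗ π₀) with hS
  have hinj : Function.Injective (A + C ∘ₗ S) := by
    rw [← LinearMap.ker_eq_bot, Submodule.eq_bot_iff]
    intro v hv
    have hv' : A v + C (S v) = 0 := hv
    have hqz : q (C (S v)) = 0 := by
      have h0 : q (A v + C (S v)) = 0 := by rw [hv', map_zero]
      have hAv : q (A v) = 0 := by
        rw [hq]
        exact (Submodule.Quotient.mk_eq_zero _).2 ⟨v, rfl⟩
      rw [map_add, hAv, zero_add] at h0
      exact h0
    have hqCv : (q ∘ₗ C) (g (e (π₀ v))) = e (π₀ v) := by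
      have := congrArg (fun f : (V ⧸ LinearMap.range A) →ₗ[K] (V ⧸ LinearMap.range A) =>
        f (e (π₀ v))) hg
      simpa using this
    have heπ : e (π₀ v) = 0 := by
      rw [← hqCv]
      exact hqz
    have hπ0 : π₀ v = 0 := by
      apply e.injective
      simpa using heπ
    have hSv : S v = 0 := by
      rw [hS]
      simp [hπ0]
    have hAv0 : A v = 0 := by
      rw [hSv, map_zero, add_zero] at hv'
      exact hv'
    have hvk : v ∈ LinearMap.ker A := LinearMap.mem_ker.2 hAv0
    have : π₀ v = ⟨v, hvk⟩ := Submodule.linearProjOfIsCompl_apply_left hM ⟨v, hvk⟩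
    rw [hπ0] at this
    exact (Submodule.mk_eq_zero _ _).1 this.symm
  exact ⟨hinj, (LinearMap.injective_iff_surjective_of_finrank_eq_finrank rfl).1 hinj⟩

end LinearAlgebra

section Mat

variable {K : Type*} [DivisionRing K] {n : ℕ}

local notation "T" => (Matrix.toLinearMapRight' :
  Matrix (Fin n) (Fin n) K ≃ₗ[Kᵐᵒᵖ] (Fin n → K) →ₗ[K] Fin n → K)

/-- A matrix over a division ring whose associated linear map is bijective is a unit. -/
lemma aux_isUnit_of_bij (m : Matrix (Fin n) (Fin n) K)
    (h : Function.Bijective (T m)) : IsUnit m := by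
  let E := LinearEquiv.ofBijective (T m) h
  set m' : Matrix (Fin n) (Fin n) K := (Matrix.toLinearMapRight' :
    Matrix (Fin n) (Fin n) K ≃ₗ[Kᵐᵒᵖ] (Fin n → K) →ₗ[K] Fin n → K).symm (E.symm : (Fin n → K) →ₗ[K] Fin n → K) with hm'
  have hTm' : T m' = (E.symm : (Fin n → K) →ₗ[K] Fin n → K) := by
    rw [hm', LinearEquiv.apply_symm_apply]
  have h1 : m * m' = 1 := by
    apply Matrix.toLinearMapRight'.injective
    rw [Matrix.toLinearMapRight'_mul, Matrix.toLinearMapRight'_one, hTm']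
    refine LinearMap.ext fun v => ?_
    exact E.symm_apply_apply v
  have h2 : m' * m = 1 := by
    apply Matrix.toLinearMapRight'.injective
    rw [Matrix.toLinearMapRight'_mul, Matrix.toLinearMapRight'_one, hTm']
    refine LinearMap.ext fun v => ?_
    exact E.apply_symm_apply v
  exact ⟨⟨m, m', h1, h2⟩, rfl⟩

/-- Stable range one for matrix rings over a division ring. -/
lemma aux_stableRange (a c x y : Matrix (Fin n) (Fin n) K) (h : x * a + y * c = 1) :
    ∃ s, IsUnit (a - s * c) := by
  have hsup : LinearMap.range (T a) ⊔ LinearMap.range (T c) = ⊤ := by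
    rw [eq_top_iff]
    rintro v -
    have hv : v = T a (T x v) + T c (T y v) := by
      calc v = T (1 : Matrix (Fin n) (Fin n) K) v := by
              rw [Matrix.toLinearMapRight'_one]; rfl
        _ = T (x * a + y * c) v := by rw [h]
        _ = T (x * a) v + T (y * c) v := by rw [map_add]; rfl
        _ = T a (T x v) + T c (T y v) := by
              rw [Matrix.toLinearMapRight'_mul_apply, Matrix.toLinearMapRight'_mul_apply]
    rw [hv]
    exact Submodule.add_mem_sup (LinearMap.mem_range_self _ _) (LinearMap.mem_range_self _ _)
  obtain ⟨S, hS⟩ := aux_keyLA (T a) (T c) hsup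
  set s' : Matrix (Fin n) (Fin n) K := (Matrix.toLinearMapRight' :
    Matrix (Fin n) (Fin n) K ≃ₗ[Kᵐᵒᵖ] (Fin n → K) →ₗ[K] Fin n → K).symm S with hs'
  have hTs : T (a + s' * c) = T a + (T c) ∘ₗ S := by
    rw [map_add, Matrix.toLinearMapRight'_mul, hs', LinearEquiv.apply_symm_apply]
  have : IsUnit (a + s' * c) := aux_isUnit_of_bij _ (by rw [hTs]; exact hS)
  exact ⟨-s', by simpa [sub_eq_add_neg, neg_mul] using this⟩

/-- Matrix rings over division rings are Dedekind finite. -/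
lemma aux_dedekind (m w : Matrix (Fin n) (Fin n) K) (h : m * w = 1) : IsUnit m := by
  have hcomp : (T w) ∘ₗ (T m) = LinearMap.id := by
    rw [← Matrix.toLinearMapRight'_mul, h, Matrix.toLinearMapRight'_one]
  have hinj : Function.Injective (T m) := by
    intro u v huv
    have hu : T w (T m u) = u := by
      have := congrArg (fun f : (Fin n → K) →ₗ[K] Fin n → K => f u) hcomp
      simpa using this
    have hv : T w (T m v) = v := by
      have := congrArg (fun f : (Fin n → K) →ₗ[K] Fin n → K => f v) hcomp
      simpa using this
    rw [← hu, ← hv, huv]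
  exact aux_isUnit_of_bij _
    ⟨hinj, (LinearMap.injective_iff_surjective_of_finrank_eq_finrank rfl).1 hinj⟩

end Mat

/-- for division rings D₁, D₂ linked by an anti-isomorphism φ
(with inverse ψ), the ring A = M(n,D₁) × M(n,D₂) with the φ-flip transpose
involution (a₁,a₂)* = (ψ(a₂)ᵗ, φ(a₁)ᵗ) is *-Euclidean of decomposition
length 1. -/
theorem stmt8 (n : ℕ) (D₁ D₂ : Type*) [DivisionRing D₁] [DivisionRing D₂]
    (φ : D₁ → D₂) (ψ : D₂ → D₁)
    (hadd : ∀ x y : D₁, φ (x + y) = φ x + φ y)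
    (hmul : ∀ x y : D₁, φ (x * y) = φ y * φ x)
    (hone : φ 1 = 1)
    (hψ : Function.LeftInverse ψ φ) (hψ' : Function.RightInverse ψ φ) :
    ∀ a c : Matrix (Fin n) (Fin n) D₁ × Matrix (Fin n) (Fin n) D₂,
      (∃ x y : Matrix (Fin n) (Fin n) D₁ × Matrix (Fin n) (Fin n) D₂,
        x * a + y * c = 1) →
      (((a.2.map ψ)ᵀ, (a.1.map φ)ᵀ) * c = ((c.2.map ψ)ᵀ, (c.1.map φ)ᵀ) * a) →
      ∃ s r : Matrix (Fin n) (Fin n) D₁ × Matrix (Fin n) (Fin n) D₂,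
        ((s.2.map ψ)ᵀ, (s.1.map φ)ᵀ) = s ∧ IsUnit r ∧ a = s * c + r := by
  intro a c hcomax hsym
  obtain ⟨x, y, hxy⟩ := hcomax
  -- basic properties of ψ
  have hψadd : ∀ u v : D₂, ψ (u + v) = ψ u + ψ v := fun u v => by
    calc ψ (u + v) = ψ (φ (ψ u + ψ v)) := by rw [hadd, hψ' u, hψ' v]
      _ = ψ u + ψ v := hψ _
  have hψmul : ∀ u v : D₂, ψ (u * v) = ψ v * ψ u := fun u v => by
    calc ψ (u * v) = ψ (φ (ψ v * ψ u)) := by rw [hmul, hψ' u, hψ' v]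
      _ = ψ v * ψ u := hψ _
  have hφ0 : φ 0 = 0 := by
    have h0 := hadd 0 0
    rw [add_zero] at h0
    exact left_eq_add.mp h0
  have hψ0 : ψ 0 = 0 := by rw [← hφ0, hψ]
  have hψ1 : ψ 1 = 1 := by rw [← hone, hψ]
  set ψh : D₂ →+ D₁ := AddMonoidHom.mk' ψ hψadd with hψh
  -- the anti-isomorphisms on matrices
  set τ : Matrix (Fin n) (Fin n) D₂ → Matrix (Fin n) (Fin n) D₁ :=
    fun m => (m.map ψ)ᵀ with hτ
  set σ : Matrix (Fin n) (Fin n) D₁ → Matrix (Fin n) (Fin n) D₂ :=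
    fun m => (m.map φ)ᵀ with hσ
  have τmul : ∀ m m' : Matrix (Fin n) (Fin n) D₂, τ (m * m') = τ m' * τ m := by
    intro m m'
    ext i j
    show ψ ((m * m') j i) = ∑ k, ψ (m' k i) * ψ (m j k)
    rw [Matrix.mul_apply]
    rw [show ψ (∑ k, m j k * m' k i) = ψh (∑ k, m j k * m' k i) from rfl, map_sum]
    exact Finset.sum_congr rfl fun k _ => hψmul _ _
  have τadd : ∀ m m' : Matrix (Fin n) (Fin n) D₂, τ (m + m') = τ m + τ m' := by
    intro m m'
    ext i j
    exact hψadd _ _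
  have τsub : ∀ m m' : Matrix (Fin n) (Fin n) D₂, τ (m - m') = τ m - τ m' := by
    intro m m'
    ext i j
    show ψh ((m - m') j i) = ψ (m j i) - ψ (m' j i)
    rw [Matrix.sub_apply, map_sub]
    rfl
  have τ1 : τ (1 : Matrix (Fin n) (Fin n) D₂) = 1 := by
    show ((1 : Matrix (Fin n) (Fin n) D₂).map ψ)ᵀ = 1
    rw [Matrix.map_one ψ hψ0 hψ1, Matrix.transpose_one]
  have στ : ∀ m : Matrix (Fin n) (Fin n) D₂, σ (τ m) = m := by
    intro m
    ext i j
    exact hψ' _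
  have τσ : ∀ m : Matrix (Fin n) (Fin n) D₁, τ (σ m) = m := by
    intro m
    ext i j
    exact hψ _
  have τinj : Function.Injective τ := Function.LeftInverse.injective στ
  have hUnitτ : ∀ m : Matrix (Fin n) (Fin n) D₂, IsUnit (τ m) → IsUnit m := by
    intro m hm
    refine ⟨⟨m, σ (Units.val hm.unit⁻¹), ?_, ?_⟩, rfl⟩
    · apply τinj
      rw [τmul, τσ, τ1]
      exact hm.val_inv_mul
    · apply τinj
      rw [τmul, τσ, τ1]
      exact hm.mul_val_inv
  -- componentwise hypotheses
  have h1 : x.1 * a.1 + y.1 * c.1 = 1 := by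
    have := congrArg Prod.fst hxy
    simpa using this
  have h2 : x.2 * a.2 + y.2 * c.2 = 1 := by
    have := congrArg Prod.snd hxy
    simpa using this
  have hsym1 : τ a.2 * c.1 = τ c.2 * a.1 := by
    have := congrArg Prod.fst hsym
    simpa [Prod.fst_mul] using this
  -- stable range one in the first component
  obtain ⟨s₁, hu⟩ := aux_stableRange a.1 c.1 x.1 y.1 h1
  set u := a.1 - s₁ * c.1 with hu_def
  set b := τ a.2 with hb
  set d := τ c.2 with hd
  set b' := b - d * s₁ with hb'
  set p := τ x.2 with hp
  set q := τ y.2 with hq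
  have hbd : b * p + d * q = 1 := by
    rw [hb, hd, hp, hq, ← τmul, ← τmul, ← τadd, h2, τ1]
  have hb'c : b' * c.1 = d * u := by
    rw [hb', hu_def, sub_mul, mul_sub, hsym1, mul_assoc]
  have huu : u * (Units.val hu.unit⁻¹) = 1 := hu.mul_val_inv
  have key : b' * c.1 * (Units.val hu.unit⁻¹) = d := by
    rw [hb'c, mul_assoc, huu, mul_one]
  have hrinv : b' * (p + c.1 * (Units.val hu.unit⁻¹) * (s₁ * p + q)) = 1 := by
    calc b' * (p + c.1 * (Units.val hu.unit⁻¹) * (s₁ * p + q))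
        = b' * p + (b' * c.1 * (Units.val hu.unit⁻¹)) * (s₁ * p + q) := by noncomm_ring
      _ = b' * p + d * (s₁ * p + q) := by rw [key]
      _ = (b' + d * s₁) * p + d * q := by noncomm_ring
      _ = b * p + d * q := by rw [hb', sub_add_cancel]
      _ = 1 := hbd
  have hb'unit : IsUnit b' := aux_dedekind _ _ hrinv
  have hr2 : IsUnit (a.2 - σ s₁ * c.2) := by
    apply hUnitτ
    rw [τsub, τmul, τσ]
    exact hb'unit
  refine ⟨(s₁, σ s₁), (u, a.2 - σ s₁ * c.2), ?_, ?_, ?_⟩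
  · exact Prod.ext (τσ s₁) rfl
  · refine ⟨⟨(u, a.2 - σ s₁ * c.2), (Units.val hu.unit⁻¹, Units.val hr2.unit⁻¹), ?_, ?_⟩, rfl⟩
    · exact Prod.ext hu.mul_val_inv hr2.mul_val_inv
    · exact Prod.ext hu.val_inv_mul hr2.val_inv_mul
  · refine Prod.ext ?_ ?_
    · show a.1 = s₁ * c.1 + u
      rw [hu_def]
      abel
    · show a.2 = σ s₁ * c.2 + (a.2 - σ s₁ * c.2)
      abel
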